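/- Type preservation of the CPS translation: if Γ ⊢ e : τ @ μα α / μβ β in λF, then ⟦Γ⟧ ⊢C ⟦e⟧ : (⟦τ⟧ → ⟦μα⟧ → ⟦α⟧) → ⟦μβ⟧ → ⟦β⟧ in λC. -/

import Mathlib

namespace LambdaF

/-! ## Syntax and operational semantics of λF -/

/-- λF expressions.  A constant `const ι n` is the `n`-th constant of base type `ι`. -/
inductive Tm : Type where
  | const : Nat → Nat → Tm
  | var : String → Tm
  | lam : String → Tm → Tm
  | app : Tm → Tm → Tm
  | control : String → Tm → Tm
  | prompt : Tm → Tm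

/-- Values `v ::= c | x | λx.e`. -/
inductive IsVal : Tm → Prop where
  | const (ι n : Nat) : IsVal (.const ι n)
  | var (x : String) : IsVal (.var x)
  | lam (x : String) (e : Tm) : IsVal (.lam x e)

/-- Substitution `e[x := v]`. -/
def subst : Tm → String → Tm → Tm
  | .const ι n, _, _ => .const ι n
  | .var y, x, v => if y = x then v else .var y
  | .lam y e, x, v => if y = x then .lam y e else .lam y (subst e x v)
  | .app e₁ e₂, x, v => .app (subst e₁ x v) (subst e₂ x v)
  | .control k e, x, v => if k = x then .control k e else .control k (subst e x v)
  | .prompt e, x, v => .prompt (subst e x v)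

/-- All variable names occurring in a term (free or bound). -/
def Tm.vars : Tm → List String
  | .const _ _ => []
  | .var y => [y]
  | .lam y e => y :: e.vars
  | .app e₁ e₂ => e₁.vars ++ e₂.vars
  | .control k e => k :: e.vars
  | .prompt e => e.vars

/-- Pure evaluation contexts `F ::= [] | F e | v F`. -/
inductive PCtx : Type where
  | hole : PCtx
  | appL : PCtx → Tm → PCtx
  | appR : Tm → PCtx → PCtx

/-- Plugging an expression into a pure context. -/
def PCtx.plug : PCtx → Tm → Tm
  | .hole, e => e
  | .appL P e₂, e => .app (P.plug e) e₂
  | .appR v P, e => .app v (P.plug e)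

/-- Well-formedness of pure contexts: in `v F`, `v` is a value. -/
inductive PCtx.Wf : PCtx → Prop where
  | hole : PCtx.Wf .hole
  | appL (P : PCtx) (e : Tm) : PCtx.Wf P → PCtx.Wf (.appL P e)
  | appR (v : Tm) (P : PCtx) : IsVal v → PCtx.Wf P → PCtx.Wf (.appR v P)

/-- All variable names occurring in a pure context. -/
def PCtx.vars : PCtx → List String
  | .hole => []
  | .appL P e => P.vars ++ e.vars
  | .appR v P => v.vars ++ P.vars

/-- General evaluation contexts `E ::= [] | E e | v E | ⟨E⟩`. -/
inductive ECtx : Type where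
  | hole : ECtx
  | appL : ECtx → Tm → ECtx
  | appR : Tm → ECtx → ECtx
  | prompt : ECtx → ECtx

/-- Plugging an expression into a general context. -/
def ECtx.plug : ECtx → Tm → Tm
  | .hole, e => e
  | .appL E e₂, e => .app (E.plug e) e₂
  | .appR v E, e => .app v (E.plug e)
  | .prompt E, e => .prompt (E.plug e)

/-- Well-formedness of general contexts: in `v E`, `v` is a value. -/
inductive ECtx.Wf : ECtx → Prop where
  | hole : ECtx.Wf .hole
  | appL (E : ECtx) (e : Tm) : ECtx.Wf E → ECtx.Wf (.appL E e)
  | appR (v : Tm) (E : ECtx) : IsVal v → ECtx.Wf E → ECtx.Wf (.appR v E)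
  | prompt (E : ECtx) : ECtx.Wf E → ECtx.Wf (.prompt E)

/-- Reduction of λF. -/
inductive Step : Tm → Tm → Prop where
  | beta (E : ECtx) (x : String) (e v : Tm) :
      E.Wf → IsVal v →
      Step (E.plug (.app (.lam x e) v)) (E.plug (subst e x v))
  | control (E : ECtx) (P : PCtx) (k : String) (e : Tm) (x : String) :
      E.Wf → P.Wf → x ∉ P.vars →
      Step (E.plug (.prompt (P.plug (.control k e))))
           (E.plug (.prompt (subst e k (.lam x (P.plug (.var x))))))
  | prompt (E : ECtx) (v : Tm) :
      E.Wf → IsVal v →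
      Step (E.plug (.prompt v)) (E.plug v)

/-- Reflexive transitive closure of reduction. -/
def Steps : Tm → Tm → Prop := Relation.ReflTransGen Step

/-! ## Types and the (original) type system of λF -/

mutual
/-- λF expression types `τ ::= ι | (τ₁ → τ₂ @ μα α μβ β)`. -/
inductive Ty : Type where
  | base : Nat → Ty
  | arrow : Ty → Ty → Tr → Ty → Tr → Ty → Ty

/-- λF trail types `μ ::= • | (τ ⇒⟨μ⟩ τ′)`. -/
inductive Tr : Type where
  | empty : Tr
  | cons : Ty → Tr → Ty → Tr
end

/-- `id-cont-type τ μ τ′`. -/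
def IdContType : Ty → Tr → Ty → Prop
  | τ, .empty, τ' => τ = τ'
  | τ, .cons τ₁ μ₁ τ₁', τ' => τ = τ₁ ∧ τ' = τ₁' ∧ μ₁ = .empty

/-- `compatible μ₁ μ₂ μ₃`. -/
inductive Compatible : Tr → Tr → Tr → Prop where
  | empty (μ : Tr) : Compatible .empty μ μ
  | consEmpty (τ₁ : Ty) (μ₁ : Tr) (τ₁' : Ty) :
      Compatible (.cons τ₁ μ₁ τ₁') .empty (.cons τ₁ μ₁ τ₁')
  | consCons (τ₁ : Ty) (μ₁ : Tr) (τ₁' : Ty) (μ₂ μ₃ : Tr) :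
      Compatible μ₂ μ₃ μ₁ →
      Compatible (.cons τ₁ μ₁ τ₁') μ₂ (.cons τ₁ μ₃ τ₁')

/-- Typing contexts. -/
abbrev Ctx := List (String × Ty)

/-- Context lookup (with shadowing). -/
inductive Lookup : Ctx → String → Ty → Prop where
  | here (Γ : Ctx) (x : String) (τ : Ty) : Lookup ((x, τ) :: Γ) x τ
  | there (Γ : Ctx) (x y : String) (τ τ' : Ty) :
      x ≠ y → Lookup Γ x τ → Lookup ((y, τ') :: Γ) x τ

/-- The typing judgment `Γ ⊢ e : τ @ μα α / μβ β` of λF. -/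
inductive HasType : Ctx → Tm → Ty → Tr → Ty → Tr → Ty → Prop where
  | const (Γ : Ctx) (ι n : Nat) (μα : Tr) (α : Ty) :
      HasType Γ (.const ι n) (.base ι) μα α μα α
  | var (Γ : Ctx) (x : String) (τ : Ty) (μα : Tr) (α : Ty) :
      Lookup Γ x τ →
      HasType Γ (.var x) τ μα α μα α
  | abs (Γ : Ctx) (x : String) (e : Tm) (τ₁ τ₂ : Ty) (μα : Tr) (α : Ty)
      (μβ : Tr) (β : Ty) (μγ : Tr) (γ : Ty) :
      HasType ((x, τ₁) :: Γ) e τ₂ μα α μβ β →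
      HasType Γ (.lam x e) (.arrow τ₁ τ₂ μα α μβ β) μγ γ μγ γ
  | app (Γ : Ctx) (e₁ e₂ : Tm) (τ₁ τ₂ : Ty) (μα : Tr) (α : Ty) (μβ : Tr) (β : Ty)
      (μγ : Tr) (γ : Ty) (μδ : Tr) (δ : Ty) :
      HasType Γ e₁ (.arrow τ₁ τ₂ μα α μβ β) μγ γ μδ δ →
      HasType Γ e₂ τ₁ μβ β μγ γ →
      HasType Γ (.app e₁ e₂) τ₂ μα α μδ δ
  | control (Γ : Ctx) (k : String) (e : Tm) (τ τ₁ : Ty) (μ₁ : Tr) (τ₁' : Ty)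
      (μ₂ μ₀ : Tr) (α β γ : Ty) (μi : Tr) (γ' : Ty) (μα μβ : Tr) :
      HasType ((k, .arrow τ τ₁ μ₁ τ₁' μ₂ α) :: Γ) e γ μi γ' .empty β →
      IdContType γ μi γ' →
      Compatible (.cons τ₁ μ₁ τ₁') μ₂ μ₀ →
      Compatible μβ μ₀ μα →
      HasType Γ (.control k e) τ μα α μβ β
  | prompt (Γ : Ctx) (e : Tm) (τ β' : Ty) (μi : Tr) (β'' : Ty) (μα : Tr) (α : Ty) :
      HasType Γ e β' μi β'' .empty τ →
      IdContType β' μi β'' →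
      HasType Γ (.prompt e) τ μα α μα α

/-! ## The target calculus λC -/

/-- λC variables: either a λF source variable, or a generated variable
    identified by a pair of numbers (level, slot). -/
abbrev CVar := Sum String (Nat × Nat)

/-- The generated λC variable at level `n`, slot `i`. -/
def gv (n i : Nat) : CVar := Sum.inr (n, i)

/-- λC expressions, with a unit value `()` and a trail-case construct
    `case t of () → e₁ | k → e₂` (binding `k` in `e₂`). -/
inductive CTm : Type where
  | const : Nat → Nat → CTm
  | cvar : CVar → CTm
  | clam : CVar → CTm → CTm
  | capp : CTm → CTm → CTm
  | unit : CTm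
  | ccase : CTm → CTm → CVar → CTm → CTm

/-- Substitution on λC expressions. -/
def substC : CTm → CVar → CTm → CTm
  | .const ι n, _, _ => .const ι n
  | .cvar y, x, v => if y = x then v else .cvar y
  | .clam y e, x, v => if y = x then .clam y e else .clam y (substC e x v)
  | .capp e₁ e₂, x, v => .capp (substC e₁ x v) (substC e₂ x v)
  | .unit, _, _ => .unit
  | .ccase t e₁ k e₂, x, v =>
      .ccase (substC t x v) (substC e₁ x v) k (if k = x then e₂ else substC e₂ x v)

/-- λC types `σ ::= ι | σ → σ | •`. -/
inductive CTy : Type where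
  | base : Nat → CTy
  | arrow : CTy → CTy → CTy
  | unit : CTy

/-- λC typing contexts. -/
abbrev CCtx := List (CVar × CTy)

/-- λC context lookup (with shadowing). -/
inductive CLookup : CCtx → CVar → CTy → Prop where
  | here (Γ : CCtx) (x : CVar) (σ : CTy) : CLookup ((x, σ) :: Γ) x σ
  | there (Γ : CCtx) (x y : CVar) (σ σ' : CTy) :
      x ≠ y → CLookup Γ x σ → CLookup ((y, σ') :: Γ) x σ

/-- The typing judgment `Γ ⊢C e : σ` of λC.  In the `ccase` rule, the first
    branch is typed under the equality assumption that the scrutinee's type is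
    `•`, and the second branch under the assumptions that `k` has the
    scrutinee's type and that this type is a function type. -/
inductive HasTypeC : CCtx → CTm → CTy → Prop where
  | const (Γ : CCtx) (ι n : Nat) : HasTypeC Γ (.const ι n) (.base ι)
  | var (Γ : CCtx) (x : CVar) (σ : CTy) :
      CLookup Γ x σ → HasTypeC Γ (.cvar x) σ
  | lam (Γ : CCtx) (x : CVar) (e : CTm) (σ₁ σ₂ : CTy) :
      HasTypeC ((x, σ₁) :: Γ) e σ₂ →
      HasTypeC Γ (.clam x e) (.arrow σ₁ σ₂)
  | app (Γ : CCtx) (e₁ e₂ : CTm) (σ₁ σ₂ : CTy) :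
      HasTypeC Γ e₁ (.arrow σ₁ σ₂) → HasTypeC Γ e₂ σ₁ →
      HasTypeC Γ (.capp e₁ e₂) σ₂
  | unit (Γ : CCtx) : HasTypeC Γ .unit .unit
  | ccase (Γ : CCtx) (t e₁ : CTm) (k : CVar) (e₂ : CTm) (σ ρ : CTy) :
      HasTypeC Γ t σ →
      (σ = .unit → HasTypeC Γ e₁ ρ) →
      (∀ σ₁ σ₂, σ = .arrow σ₁ σ₂ → HasTypeC ((k, σ) :: Γ) e₂ ρ) →
      HasTypeC Γ (.ccase t e₁ k e₂) ρ

/-- The identity continuation `k_id = λv.λt. case t of () → v | k → k v ()`. -/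
def kidTm : CTm :=
  .clam (gv 0 13) (.clam (gv 0 14)
    (.ccase (.cvar (gv 0 14)) (.cvar (gv 0 13)) (gv 0 15)
      (.capp (.capp (.cvar (gv 0 15)) (.cvar (gv 0 13))) .unit)))

/-! ## CPS translation of λF types, and the trail operations of λC -/

mutual
/-- CPS translation of λF expression types. -/
def cpsTy : Ty → CTy
  | .base ι => .base ι
  | .arrow τ₁ τ₂ μα α μβ β =>
      .arrow (cpsTy τ₁)
        (.arrow (.arrow (cpsTy τ₂) (.arrow (cpsTr μα) (cpsTy α)))
          (.arrow (cpsTr μβ) (cpsTy β)))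

/-- CPS translation of λF trail types. -/
def cpsTr : Tr → CTy
  | .empty => .unit
  | .cons τ μ τ' => .arrow (cpsTy τ) (.arrow (cpsTr μ) (cpsTy τ'))
end

/-- Size of a trail type. -/
def Tr.size : Tr → Nat
  | .empty => 0
  | .cons _ μ _ => μ.size + 1

/-- The trail-cons operation
    `k :: t = case t of () → k | k′ → λv.λt′. k v (k′ :: t′)`,
    defined by recursion on trail types: `consTm μA μB μC m k t` is the body of
    `k :: t` when `k` expects a trail of type `μA`, `t` has trail type `μB`,
    and the result has trail type `μC` (level `m` is used to generate fresh
    variable names).  In the branches that the trail types rule out, the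
    (dead) recursive occurrence `k′ :: t′` is truncated. -/
def consTm : Tr → Tr → Tr → Nat → CTm → CTm → CTm
  | μA, .cons _ μB' _, .cons _ μC' _, m, k, t =>
      .ccase t k (gv m 10)
        (.clam (gv m 11) (.clam (gv m 12)
          (.capp (.capp k (.cvar (gv m 11)))
            (consTm μB' μC' μA (m + 1) (.cvar (gv m 10)) (.cvar (gv m 12))))))
  | _, _, _, m, k, t =>
      .ccase t k (gv m 10)
        (.clam (gv m 11) (.clam (gv m 12)
          (.capp (.capp k (.cvar (gv m 11))) (.cvar (gv m 12)))))
termination_by μA μB μC _ _ _ => μA.size + μB.size + μC.size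
decreasing_by simp [Tr.size]; omega

/-- The trail-append operation `t @ t′ = case t of () → t′ | k → k :: t′`:
    `appendTm μ₁ μ₂ μ₃ m t t′` is the body of `t @ t′` when `t : μ₁`,
    `t′ : μ₂` and the result has trail type `μ₃`. -/
def appendTm : Tr → Tr → Tr → Nat → CTm → CTm → CTm
  | .empty, _, _, m, t, t' => .ccase t t' (gv m 10) (.cvar (gv m 10))
  | .cons _ μ₁' _, μ₂, μ₃, m, t, t' =>
      .ccase t t' (gv m 10) (consTm μ₁' μ₂ μ₃ (m + 1) (.cvar (gv m 10)) t')

/-! ## The CPS translation of λF expressions, as a relation on typing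
    derivations.  `Cps n Γ e τ μα α μβ β e'` means that the λF expression `e`,
    typed as `Γ ⊢ e : τ @ μα α / μβ β`, CPS-translates to the λC expression
    `e'`.  The number `n` is a level used to generate fresh variable names:
    the translation of a node at level `n` uses the generated variables
    `gv n 0, gv n 1, ...` (`k`, `t`, ...), and subterms are translated at
    higher levels, so no variable capture can occur. -/
inductive Cps : Nat → Ctx → Tm → Ty → Tr → Ty → Tr → Ty → CTm → Prop where
  | const (n : Nat) (Γ : Ctx) (ι c : Nat) (μα : Tr) (α : Ty) :
      Cps n Γ (.const ι c) (.base ι) μα α μα α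
        (.clam (gv n 0) (.clam (gv n 1)
          (.capp (.capp (.cvar (gv n 0)) (.const ι c)) (.cvar (gv n 1)))))
  | var (n : Nat) (Γ : Ctx) (x : String) (τ : Ty) (μα : Tr) (α : Ty) :
      Lookup Γ x τ →
      Cps n Γ (.var x) τ μα α μα α
        (.clam (gv n 0) (.clam (gv n 1)
          (.capp (.capp (.cvar (gv n 0)) (.cvar (Sum.inl x))) (.cvar (gv n 1)))))
  | abs (n : Nat) (Γ : Ctx) (x : String) (e : Tm) (τ₁ τ₂ : Ty) (μα : Tr) (α : Ty)
      (μβ : Tr) (β : Ty) (μγ : Tr) (γ : Ty) (e' : CTm) :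
      Cps (n + 1) ((x, τ₁) :: Γ) e τ₂ μα α μβ β e' →
      Cps n Γ (.lam x e) (.arrow τ₁ τ₂ μα α μβ β) μγ γ μγ γ
        (.clam (gv n 0) (.clam (gv n 1)
          (.capp
            (.capp (.cvar (gv n 0))
              (.clam (Sum.inl x) (.clam (gv n 2) (.clam (gv n 3)
                (.capp (.capp e' (.cvar (gv n 2))) (.cvar (gv n 3)))))))
            (.cvar (gv n 1)))))
  | app (n : Nat) (Γ : Ctx) (e₁ e₂ : Tm) (τ₁ τ₂ : Ty) (μα : Tr) (α : Ty)
      (μβ : Tr) (β : Ty) (μγ : Tr) (γ : Ty) (μδ : Tr) (δ : Ty) (e₁' e₂' : CTm) :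
      Cps (n + 1) Γ e₁ (.arrow τ₁ τ₂ μα α μβ β) μγ γ μδ δ e₁' →
      Cps (n + 2) Γ e₂ τ₁ μβ β μγ γ e₂' →
      Cps n Γ (.app e₁ e₂) τ₂ μα α μδ δ
        (.clam (gv n 0) (.clam (gv n 1)
          (.capp
            (.capp e₁'
              (.clam (gv n 2) (.clam (gv n 3)
                (.capp
                  (.capp e₂'
                    (.clam (gv n 4) (.clam (gv n 5)
                      (.capp
                        (.capp (.capp (.cvar (gv n 2)) (.cvar (gv n 4)))
                          (.cvar (gv n 0)))
                        (.cvar (gv n 5))))))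
                  (.cvar (gv n 3))))))
            (.cvar (gv n 1)))))
  | control (n : Nat) (Γ : Ctx) (k : String) (e : Tm) (τ τ₁ : Ty) (μ₁ : Tr)
      (τ₁' : Ty) (μ₂ μ₀ : Tr) (α β γ : Ty) (μi : Tr) (γ' : Ty) (μα μβ : Tr)
      (e' : CTm) :
      Cps (n + 1) ((k, .arrow τ τ₁ μ₁ τ₁' μ₂ α) :: Γ) e γ μi γ' .empty β e' →
      IdContType γ μi γ' →
      Compatible (.cons τ₁ μ₁ τ₁') μ₂ μ₀ →
      Compatible μβ μ₀ μα →
      Cps n Γ (.control k e) τ μα α μβ β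
        (.clam (gv n 0) (.clam (gv n 1)
          (.capp
            (.capp
              (substC e' (Sum.inl k)
                (.clam (gv n 2) (.clam (gv n 3) (.clam (gv n 4)
                  (.capp (.capp (.cvar (gv n 0)) (.cvar (gv n 2)))
                    (appendTm μβ μ₀ μα n (.cvar (gv n 1))
                      (consTm μ₁ μ₂ μ₀ n (.cvar (gv n 3)) (.cvar (gv n 4)))))))))
              kidTm)
            .unit)))
  | prompt (n : Nat) (Γ : Ctx) (e : Tm) (τ β' : Ty) (μi : Tr) (β'' : Ty)
      (μα : Tr) (α : Ty) (e' : CTm) :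
      Cps (n + 1) Γ e β' μi β'' .empty τ e' →
      IdContType β' μi β'' →
      Cps n Γ (.prompt e) τ μα α μα α
        (.clam (gv n 0) (.clam (gv n 1)
          (.capp (.capp (.cvar (gv n 0)) (.capp (.capp e' kidTm) .unit))
            (.cvar (gv n 1)))))


/-! ### Auxiliary development -/

/-- Free variables of a λC term. -/
def CTm.fv : CTm → List CVar
  | .const _ _ => []
  | .cvar y => [y]
  | .clam y e => e.fv.filter (· ≠ y)
  | .capp a b => a.fv ++ b.fv
  | .unit => []
  | .ccase t e₁ k e₂ => t.fv ++ e₁.fv ++ e₂.fv.filter (· ≠ k)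

/-- Bound variables of a λC term. -/
def CTm.bv : CTm → List CVar
  | .const _ _ => []
  | .cvar _ => []
  | .clam y e => y :: e.bv
  | .capp a b => a.bv ++ b.bv
  | .unit => []
  | .ccase t e₁ k e₂ => k :: (t.bv ++ e₁.bv ++ e₂.bv)

/-- Two contexts are equivalent if they have the same lookups. -/
def CEquiv (Δ Δ' : CCtx) : Prop := ∀ z τ, CLookup Δ z τ ↔ CLookup Δ' z τ

lemma clookup_det {Γ : CCtx} {x : CVar} {τ τ' : CTy}
    (h : CLookup Γ x τ) (h' : CLookup Γ x τ') : τ = τ' := by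
  induction h with
  | here Γ x σ =>
    cases h' with
    | here => rfl
    | there _ _ _ _ _ hne _ => exact absurd rfl hne
  | there Γ x y σ σ' hne hl ih =>
    cases h' with
    | here => exact absurd rfl hne
    | there _ _ _ _ _ _ hl' => exact ih hl'

lemma cequiv_refl (Δ : CCtx) : CEquiv Δ Δ := fun _ _ => Iff.rfl

lemma cequiv_cons {Δ Δ' : CCtx} (h : CEquiv Δ Δ') (y : CVar) (σ : CTy) :
    CEquiv ((y, σ) :: Δ) ((y, σ) :: Δ') := by
  intro z τ
  constructor <;> intro hl
  · cases hl with
    | here => exact .here ..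
    | there _ _ _ _ _ hne hl => exact .there _ _ _ _ _ hne ((h _ _).1 hl)
  · cases hl with
    | here => exact .here ..
    | there _ _ _ _ _ hne hl => exact .there _ _ _ _ _ hne ((h _ _).2 hl)

lemma cequiv_shadow {y : CVar} {σ₁ σ : CTy} {Γ : CCtx} :
    CEquiv ((y, σ₁) :: (y, σ) :: Γ) ((y, σ₁) :: Γ) := by
  intro z τ
  constructor <;> intro hl
  · cases hl with
    | here => exact .here ..
    | there _ _ _ _ _ hne hl =>
      cases hl with
      | here => exact absurd rfl hne
      | there _ _ _ _ _ _ hl' => exact .there _ _ _ _ _ hne hl'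
  · cases hl with
    | here => exact .here ..
    | there _ _ _ _ _ hne hl =>
      exact .there _ _ _ _ _ hne (.there _ _ _ _ _ hne hl)

lemma cequiv_swap {a b : CVar} {σa σb : CTy} {Γ : CCtx} (hab : a ≠ b) :
    CEquiv ((a, σa) :: (b, σb) :: Γ) ((b, σb) :: (a, σa) :: Γ) := by
  intro z τ
  constructor <;> intro hl
  · cases hl with
    | here => exact .there _ _ _ _ _ hab (.here ..)
    | there _ _ _ _ _ hne hl =>
      cases hl with
      | here => exact .here ..
      | there _ _ _ _ _ hne' hl' => exact .there _ _ _ _ _ hne' (.there _ _ _ _ _ hne hl')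
  · cases hl with
    | here => exact .there _ _ _ _ _ (Ne.symm hab) (.here ..)
    | there _ _ _ _ _ hne hl =>
      cases hl with
      | here => exact .here ..
      | there _ _ _ _ _ hne' hl' => exact .there _ _ _ _ _ hne' (.there _ _ _ _ _ hne hl')

lemma hasTypeC_equiv {Δ : CCtx} {e : CTm} {ρ : CTy} (h : HasTypeC Δ e ρ) :
    ∀ {Δ' : CCtx}, CEquiv Δ Δ' → HasTypeC Δ' e ρ := by
  induction h with
  | const => intro Δ' _; exact .const _ _ _
  | var _ x σ hl => intro Δ' he; exact .var _ _ _ ((he _ _).1 hl)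
  | lam _ x e σ₁ σ₂ _ ih => intro Δ' he; exact .lam _ _ _ _ _ (ih (cequiv_cons he _ _))
  | app _ _ _ _ _ _ _ ih1 ih2 => intro Δ' he; exact .app _ _ _ _ _ (ih1 he) (ih2 he)
  | unit => intro Δ' _; exact .unit _
  | ccase _ t e₁ k e₂ σ ρ _ _ _ iht ih1 ih2 =>
    intro Δ' he
    exact .ccase _ _ _ _ _ _ _ (iht he) (fun hu => ih1 hu he)
      (fun σ₁ σ₂ ha => ih2 σ₁ σ₂ ha (cequiv_cons he _ _))

lemma hasTypeC_weaken {Γ : CCtx} {e : CTm} {σ : CTy} (h : HasTypeC Γ e σ) :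
    ∀ (y : CVar) (σ' : CTy), y ∉ e.fv → HasTypeC ((y, σ') :: Γ) e σ := by
  induction h with
  | const => intro y σ' _; exact .const _ _ _
  | var _ x σ hl =>
    intro y σ' hy
    simp [CTm.fv] at hy
    exact .var _ _ _ (.there _ _ _ _ _ (Ne.symm hy) hl)
  | lam Γ b e σ₁ σ₂ hbody ih =>
    intro y σ' hy
    by_cases hb : b = y
    · subst hb
      exact .lam _ _ _ _ _ (hasTypeC_equiv hbody (fun z τ => (cequiv_shadow z τ).symm))
    · have hyb : y ∉ e.fv := fun hm =>
        hy (by simp [CTm.fv, List.mem_filter]; exact ⟨hm, Ne.symm hb⟩)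
      exact .lam _ _ _ _ _ (hasTypeC_equiv (ih y σ' hyb) (cequiv_swap (Ne.symm hb)))
  | app _ _ _ _ _ _ _ ih1 ih2 =>
    intro y σ' hy
    simp [CTm.fv] at hy
    exact .app _ _ _ _ _ (ih1 y σ' hy.1) (ih2 y σ' hy.2)
  | unit => intro y σ' _; exact .unit _
  | ccase Γ t e₁ k e₂ σs ρ ht h1 h2 iht ih1 ih2 =>
    intro y σ' hy
    have hyt : y ∉ t.fv := fun hm => hy (by simp [CTm.fv]; tauto)
    have hy1 : y ∉ e₁.fv := fun hm => hy (by simp [CTm.fv]; tauto)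
    refine .ccase _ _ _ _ _ _ _ (iht y σ' hyt) (fun hu => ih1 hu y σ' hy1) ?_
    intro σ₁ σ₂ ha
    by_cases hk : k = y
    · subst hk
      exact hasTypeC_equiv (h2 σ₁ σ₂ ha) (fun z τ => (cequiv_shadow z τ).symm)
    · have hy2 : y ∉ e₂.fv := fun hm =>
        hy (by simp [CTm.fv, List.mem_filter]; tauto)
      exact hasTypeC_equiv (ih2 σ₁ σ₂ ha y σ' hy2) (cequiv_swap (Ne.symm hk))

lemma hasTypeC_subst {Δ : CCtx} {e : CTm} {ρ : CTy} (h : HasTypeC Δ e ρ) :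
    ∀ {x : CVar} {σ : CTy} {v : CTm} {Γ : CCtx},
      CEquiv Δ ((x, σ) :: Γ) → HasTypeC Γ v σ → (∀ b ∈ e.bv, b ∉ v.fv) →
      HasTypeC Γ (substC e x v) ρ := by
  induction h with
  | const => intro x σ v Γ he hv hb; exact .const _ _ _
  | var _ z ρ hl =>
    intro x σ v Γ he hv hb
    have hl' : CLookup ((x, σ) :: Γ) z ρ := (he _ _).1 hl
    by_cases hz : z = x
    · subst hz
      have hρ : ρ = σ := by
        cases hl' with
        | here => rfl
        | there _ _ _ _ _ hne _ => exact absurd rfl hne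
      subst hρ
      simpa [substC] using hv
    · have hlg : CLookup Γ z ρ := by
        cases hl' with
        | here => exact absurd rfl hz
        | there _ _ _ _ _ _ hl'' => exact hl''
      simp only [substC, if_neg hz]
      exact .var _ _ _ hlg
  | lam Δ b e σ₁ σ₂ hbody ih =>
    intro x σ v Γ he hv hb
    by_cases hbx : b = x
    · subst hbx
      simp only [substC, if_pos rfl]
      refine .lam _ _ _ _ _ (hasTypeC_equiv hbody ?_)
      intro z τ
      exact Iff.trans ((cequiv_cons he b σ₁) z τ) (cequiv_shadow z τ)
    · simp only [substC, if_neg hbx]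
      refine .lam _ _ _ _ _ (ih ?_ (hasTypeC_weaken hv b σ₁ ?_) ?_)
      · intro z τ
        exact Iff.trans ((cequiv_cons he b σ₁) z τ) ((cequiv_swap hbx) z τ)
      · exact hb b (by simp [CTm.bv])
      · intro b' hb'
        exact hb b' (by simp [CTm.bv]; exact Or.inr hb')
  | app _ e₁ e₂ _ _ h1 h2 ih1 ih2 =>
    intro x σ v Γ he hv hb
    simp only [substC]
    refine .app _ _ _ _ _ (ih1 he hv ?_) (ih2 he hv ?_)
    · exact fun b' hb' => hb b' (by simp [CTm.bv]; tauto)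
    · exact fun b' hb' => hb b' (by simp [CTm.bv]; tauto)
  | unit => intro x σ v Γ he hv hb; exact .unit _
  | ccase Δ t e₁ k e₂ σs ρ ht h1 h2 iht ih1 ih2 =>
    intro x σ v Γ he hv hb
    have hbt : ∀ b ∈ t.bv, b ∉ v.fv := fun b' hb' => hb b' (by simp [CTm.bv]; tauto)
    have hb1 : ∀ b ∈ e₁.bv, b ∉ v.fv := fun b' hb' => hb b' (by simp [CTm.bv]; tauto)
    have hb2 : ∀ b ∈ e₂.bv, b ∉ v.fv := fun b' hb' => hb b' (by simp [CTm.bv]; tauto)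
    by_cases hk : k = x
    · simp only [substC, if_pos hk]
      subst hk
      refine .ccase _ _ _ _ _ _ _ (iht he hv hbt) (fun hu => ih1 hu he hv hb1) ?_
      intro σ₁ σ₂ ha
      refine hasTypeC_equiv (h2 σ₁ σ₂ ha) ?_
      intro z τ
      exact Iff.trans ((cequiv_cons he k σs) z τ) (cequiv_shadow z τ)
    · simp only [substC, if_neg hk]
      refine .ccase _ _ _ _ _ _ _ (iht he hv hbt) (fun hu => ih1 hu he hv hb1) ?_
      intro σ₁ σ₂ ha
      refine ih2 σ₁ σ₂ ha ?_ (hasTypeC_weaken hv k σs ?_) hb2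
      · intro z τ
        exact Iff.trans ((cequiv_cons he k σs) z τ) ((cequiv_swap hk) z τ)
      · exact hb k (by simp [CTm.bv])

/-- `x` is distinct from all generated variables `gv p i` with `p ≥ m`, `i ≥ 10`. -/
def FreshV (m : Nat) (x : CVar) : Prop :=
  ∀ p i, m ≤ p → 10 ≤ i → x ≠ Sum.inr (p, i)

lemma freshV_mono {m : Nat} {x : CVar} (h : FreshV m x) : FreshV (m + 1) x :=
  fun p i hp hi => h p i (by omega) hi

lemma freshV_gv_low {m' m i : Nat} (h : i < 10) : FreshV m' (gv m i) := by
  intro p j _ hj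
  simp only [gv, ne_eq, Sum.inr.injEq, Prod.mk.injEq, not_and]
  omega

lemma freshV_gv_level {n m i : Nat} (h : m < n) : FreshV n (gv m i) := by
  intro p j hp _
  simp only [gv, ne_eq, Sum.inr.injEq, Prod.mk.injEq, not_and]
  omega

lemma consTm_empty (μA μC : Tr) (m : Nat) (k t : CTm) :
    consTm μA .empty μC m k t =
      .ccase t k (gv m 10)
        (.clam (gv m 11) (.clam (gv m 12)
          (.capp (.capp k (.cvar (gv m 11))) (.cvar (gv m 12))))) := by
  rw [consTm] <;> simp

lemma fv_consTm (μA μB μC : Tr) (m : Nat) (k t : CTm) :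
    ∀ v ∈ (consTm μA μB μC m k t).fv, v ∈ k.fv ∨ v ∈ t.fv := by
  induction μA, μB, μC, m, k, t using consTm.induct with
  | case1 μA a μB' a1 a2 μC' a3 m k t ih =>
    rw [consTm]
    intro v hv
    have ih' := ih v
    simp only [CTm.fv, List.mem_append, List.mem_filter, List.mem_cons, List.mem_singleton,
      List.not_mem_nil, or_false, decide_eq_true_eq] at hv ih'
    rcases hv with (ht | hk) | ⟨⟨⟨(hk2 | h11e) | hrec, h12⟩, h11⟩, h10⟩
    · exact Or.inr ht
    · exact Or.inl hk
    · exact Or.inl hk2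
    · exact absurd h11e h11
    · rcases ih' hrec with h | h
      · exact absurd h h10
      · exact absurd h h12
  | case2 μA μB μC m k t hne =>
    have heq : consTm μA μB μC m k t =
        .ccase t k (gv m 10)
          (.clam (gv m 11) (.clam (gv m 12)
            (.capp (.capp k (.cvar (gv m 11))) (.cvar (gv m 12))))) := by
      rw [consTm]
      exact hne
    rw [heq]
    intro v hv
    simp only [CTm.fv, List.mem_append, List.mem_filter, List.mem_cons, List.mem_singleton,
      List.not_mem_nil, or_false, decide_eq_true_eq] at hv
    rcases hv with (ht | hk) | ⟨⟨⟨(hk2 | h11e) | h12e, h12⟩, h11⟩, h10⟩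
    · exact Or.inr ht
    · exact Or.inl hk
    · exact Or.inl hk2
    · exact absurd h11e h11
    · exact absurd h12e h12

lemma bv_consTm (μA μB μC : Tr) (m : Nat) (k t : CTm) :
    ∀ v ∈ (consTm μA μB μC m k t).bv,
      v ∈ k.bv ∨ v ∈ t.bv ∨ ∃ p i, m ≤ p ∧ 10 ≤ i ∧ v = Sum.inr (p, i) := by
  induction μA, μB, μC, m, k, t using consTm.induct with
  | case1 μA a μB' a1 a2 μC' a3 m k t ih =>
    rw [consTm]
    intro v hv
    have ih' := ih v
    simp only [CTm.bv, List.mem_append, List.mem_cons, List.not_mem_nil, or_false] at hv ih'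
    rcases hv with h | (ht | hk) | h | h | hk2 | hrec
    · exact Or.inr (Or.inr ⟨m, 10, Nat.le_refl _, by omega, by simp [h, gv]⟩)
    · exact Or.inr (Or.inl ht)
    · exact Or.inl hk
    · exact Or.inr (Or.inr ⟨m, 11, Nat.le_refl _, by omega, by simp [h, gv]⟩)
    · exact Or.inr (Or.inr ⟨m, 12, Nat.le_refl _, by omega, by simp [h, gv]⟩)
    · exact Or.inl hk2
    · rcases ih' hrec with hm | hm | ⟨p, i, hp, hi, hv'⟩
      · simp [CTm.bv] at hm
      · simp [CTm.bv] at hm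
      · exact Or.inr (Or.inr ⟨p, i, by omega, hi, hv'⟩)
  | case2 μA μB μC m k t hne =>
    have heq : consTm μA μB μC m k t =
        .ccase t k (gv m 10)
          (.clam (gv m 11) (.clam (gv m 12)
            (.capp (.capp k (.cvar (gv m 11))) (.cvar (gv m 12))))) := by
      rw [consTm]
      exact hne
    rw [heq]
    intro v hv
    simp only [CTm.bv, List.mem_append, List.mem_cons, List.not_mem_nil, or_false] at hv
    rcases hv with h | (ht | hk) | h | h | hk2
    · exact Or.inr (Or.inr ⟨m, 10, Nat.le_refl _, by omega, by simp [h, gv]⟩)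
    · exact Or.inr (Or.inl ht)
    · exact Or.inl hk
    · exact Or.inr (Or.inr ⟨m, 11, Nat.le_refl _, by omega, by simp [h, gv]⟩)
    · exact Or.inr (Or.inr ⟨m, 12, Nat.le_refl _, by omega, by simp [h, gv]⟩)
    · exact Or.inl hk2

lemma fv_appendTm (μ₁ μ₂ μ₃ : Tr) (m : Nat) (t t' : CTm) :
    ∀ v ∈ (appendTm μ₁ μ₂ μ₃ m t t').fv, v ∈ t.fv ∨ v ∈ t'.fv := by
  cases μ₁ with
  | empty =>
    intro v hv
    simp only [appendTm, CTm.fv, List.mem_append, List.mem_filter, List.mem_cons,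
      List.mem_singleton, List.not_mem_nil, or_false, decide_eq_true_eq] at hv
    rcases hv with (ht | ht') | ⟨h, h'⟩
    · exact Or.inl ht
    · exact Or.inr ht'
    · exact absurd h h'
  | cons a μ₁' b =>
    intro v hv
    have hc := fv_consTm μ₁' μ₂ μ₃ (m + 1) (.cvar (gv m 10)) t' v
    simp only [appendTm, CTm.fv, List.mem_append, List.mem_filter, List.mem_cons,
      List.mem_singleton, List.not_mem_nil, or_false, decide_eq_true_eq] at hv hc
    rcases hv with (ht | ht') | ⟨hrec, h10⟩
    · exact Or.inl ht
    · exact Or.inr ht'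
    · rcases hc hrec with h | h
      · exact absurd h h10
      · exact Or.inr h

lemma bv_appendTm (μ₁ μ₂ μ₃ : Tr) (m : Nat) (t t' : CTm) :
    ∀ v ∈ (appendTm μ₁ μ₂ μ₃ m t t').bv,
      v ∈ t.bv ∨ v ∈ t'.bv ∨ ∃ p i, m ≤ p ∧ 10 ≤ i ∧ v = Sum.inr (p, i) := by
  cases μ₁ with
  | empty =>
    intro v hv
    simp only [appendTm, CTm.bv, List.mem_append, List.mem_cons, List.not_mem_nil,
      or_false] at hv
    rcases hv with h | ht | ht'
    · exact Or.inr (Or.inr ⟨m, 10, Nat.le_refl _, by omega, by simp [h, gv]⟩)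
    · exact Or.inl ht
    · exact Or.inr (Or.inl ht')
  | cons a μ₁' b =>
    intro v hv
    have hc := bv_consTm μ₁' μ₂ μ₃ (m + 1) (.cvar (gv m 10)) t' v
    simp only [appendTm, CTm.bv, List.mem_append, List.mem_cons, List.not_mem_nil,
      or_false] at hv hc
    rcases hv with h | (ht | ht') | hrec
    · exact Or.inr (Or.inr ⟨m, 10, Nat.le_refl _, by omega, by simp [h, gv]⟩)
    · exact Or.inl ht
    · exact Or.inr (Or.inl ht')
    · rcases hc hrec with hm | hm | ⟨p, i, hp, hi, hv'⟩
      · simp [CTm.bv] at hm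
      · exact Or.inr (Or.inl hm)
      · exact Or.inr (Or.inr ⟨p, i, by omega, hi, hv'⟩)

lemma cpsTr_empty : cpsTr .empty = CTy.unit := by simp [cpsTr]

lemma cpsTr_cons (τ : Ty) (μ : Tr) (τ' : Ty) :
    cpsTr (.cons τ μ τ') = .arrow (cpsTy τ) (.arrow (cpsTr μ) (cpsTy τ')) := by
  simp [cpsTr]

lemma kid_typing {γ : Ty} {μi : Tr} {γ' : Ty} (h : IdContType γ μi γ') (Γ : CCtx) :
    HasTypeC Γ kidTm (.arrow (cpsTy γ) (.arrow (cpsTr μi) (cpsTy γ'))) := by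
  cases μi with
  | empty =>
    have hγ : γ = γ' := h
    subst hγ
    refine .lam _ _ _ _ _ (.lam _ _ _ _ _ (.ccase _ _ _ _ _ (cpsTr .empty) _ ?_ ?_ ?_))
    · exact .var _ _ _ (.here ..)
    · intro _
      exact .var _ _ _ (.there _ _ _ _ _ (by simp [gv]) (.here ..))
    · intro σ₁ σ₂ ha
      exact absurd ha (by rw [cpsTr_empty]; simp)
  | cons τ₁ μ₁ τ₁' =>
    simp only [IdContType] at h
    obtain ⟨h1, h2, h3⟩ := h
    subst h1; subst h2; subst h3
    refine .lam _ _ _ _ _ (.lam _ _ _ _ _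
      (.ccase _ _ _ _ _ (cpsTr (.cons γ .empty γ')) _ ?_ ?_ ?_))
    · exact .var _ _ _ (.here ..)
    · intro hu
      exact absurd hu (by rw [cpsTr_cons]; simp)
    · intro σ₁ σ₂ ha
      refine .app _ _ _ (cpsTr .empty) _ (.app _ _ _ (cpsTy γ) _ ?_ ?_) ?_
      · have : CLookup ((gv 0 15, cpsTr (.cons γ .empty γ')) ::
            (gv 0 14, cpsTr (.cons γ .empty γ')) :: (gv 0 13, cpsTy γ) :: Γ)
            (gv 0 15) (cpsTr (.cons γ .empty γ')) := .here ..
        have hv := HasTypeC.var _ _ _ this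
        rwa [cpsTr_cons] at hv
      · refine .var _ _ _ (.there _ _ _ _ _ (by simp [gv]) (.there _ _ _ _ _ (by simp [gv]) (.here ..)))
      · rw [cpsTr_empty]; exact .unit _

lemma cons_typing {μA μB μC : Tr} (hc : Compatible μA μB μC) :
    ∀ {τ : Ty} {μA' : Tr} {τ' : Ty}, μA = .cons τ μA' τ' →
      ∀ (m : Nat) (Γ : CCtx) (k : CVar) (t : CTm),
        CLookup Γ k (cpsTr μA) → HasTypeC Γ t (cpsTr μB) → FreshV m k →
        (∀ v ∈ t.fv, FreshV m v) →
        HasTypeC Γ (consTm μA' μB μC m (.cvar k) t) (cpsTr μC) := by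
  induction hc with
  | empty μ =>
    intro τ μA' τ' h
    cases h
  | consEmpty τ₁ μ₁ τ₁' =>
    intro τ μA' τ' h m Γ k t hk ht hfk hft
    injection h with e1 e2 e3
    subst e1; subst e2; subst e3
    rw [consTm_empty]
    refine .ccase _ _ _ _ _ _ _ ht (fun _ => .var _ _ _ hk) ?_
    intro σ₁ σ₂ ha
    exact absurd ha (by rw [cpsTr_empty]; simp)
  | consCons τ₁ μ₁ τ₁' μ₂ μ₃ h ih =>
    intro τ μA' τ' heq m Γ k t hk ht hfk hft
    injection heq with e1 e2 e3
    subst e1; subst e2; subst e3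
    cases μ₂ with
    | empty =>
      have h3 : μ₃ = μ₁ := by cases h; rfl
      subst h3
      rw [consTm_empty]
      refine .ccase _ _ _ _ _ _ _ ht (fun _ => .var _ _ _ hk) ?_
      intro σ₁ σ₂ ha
      exact absurd ha (by rw [cpsTr_empty]; simp)
    | cons τa μ₂' τb =>
      rw [consTm]
      refine .ccase _ _ _ _ _ _ _ ht ?_ ?_
      · intro hu
        exact absurd hu (by rw [cpsTr_cons]; simp)
      · intro σ₁ σ₂ ha
        rw [cpsTr_cons]
        refine .lam _ _ _ _ _ (.lam _ _ _ _ _ ?_)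
        -- context: (gv m 12, cpsTr μ₃) :: (gv m 11, cpsTy τ₁) :: (gv m 10, cpsTr (cons τa μ₂' τb)) :: Γ
        have hk3 : CLookup ((gv m 12, cpsTr μ₃) :: (gv m 11, cpsTy τ₁) ::
            (gv m 10, cpsTr (.cons τa μ₂' τb)) :: Γ) k (cpsTr (.cons τ₁ μ₁ τ₁')) :=
          .there _ _ _ _ _ (hfk m 12 (Nat.le_refl _) (by omega))
            (.there _ _ _ _ _ (hfk m 11 (Nat.le_refl _) (by omega))
              (.there _ _ _ _ _ (hfk m 10 (Nat.le_refl _) (by omega)) hk))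
        refine .app _ _ _ (cpsTr μ₁) _ (.app _ _ _ (cpsTy τ₁) _ ?_ ?_) ?_
        · have hv := HasTypeC.var _ _ _ hk3
          rwa [cpsTr_cons] at hv
        · exact .var _ _ _ (.there _ _ _ _ _ (by simp [gv]) (.here ..))
        · refine ih rfl (m + 1) _ (gv m 10) (.cvar (gv m 12)) ?_ ?_ ?_ ?_
          · exact .there _ _ _ _ _ (by simp [gv]) (.there _ _ _ _ _ (by simp [gv]) (.here ..))
          · exact .var _ _ _ (.here ..)
          · exact freshV_gv_level (by omega)
          · intro v hv
            simp only [CTm.fv, List.mem_singleton] at hv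
            subst hv
            exact freshV_gv_level (by omega)

lemma append_typing {μβ μ₀ μα : Tr} (hc : Compatible μβ μ₀ μα) (m : Nat) (Γ : CCtx)
    (xt : CVar) (t' : CTm) (hxt : CLookup Γ xt (cpsTr μβ)) (ht' : HasTypeC Γ t' (cpsTr μ₀))
    (hfx : FreshV m xt) (hft : ∀ v ∈ t'.fv, FreshV m v) :
    HasTypeC Γ (appendTm μβ μ₀ μα m (.cvar xt) t') (cpsTr μα) := by
  cases μβ with
  | empty =>
    have h0 : μ₀ = μα := by cases hc; rfl
    subst h0
    simp only [appendTm]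
    refine .ccase _ _ _ _ _ _ _ (.var _ _ _ hxt) (fun _ => ht') ?_
    intro σ₁ σ₂ ha
    exact absurd ha (by rw [cpsTr_empty]; simp)
  | cons τ μβ' τ'' =>
    simp only [appendTm]
    refine .ccase _ _ _ _ _ _ _ (.var _ _ _ hxt) ?_ ?_
    · intro hu
      exact absurd hu (by rw [cpsTr_cons]; simp)
    · intro σ₁ σ₂ ha
      refine cons_typing hc rfl (m + 1) _ (gv m 10) t' (.here ..) ?_
        (freshV_gv_level (by omega)) (fun v hv => freshV_mono (hft v hv))
      exact hasTypeC_weaken ht' (gv m 10) _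
        (fun hm => (hft _ hm) m 10 (Nat.le_refl _) (Nat.le_refl _) rfl)

/-- Permitted bound variables of the CPS output at level `n`. -/
def BvOk (n : Nat) (v : CVar) : Prop :=
  (∃ s, v = Sum.inl s) ∨ ∃ m i, v = Sum.inr (m, i) ∧ (n ≤ m ∨ 10 ≤ i)

lemma bvOk_mono {n : Nat} {v : CVar} (h : BvOk (n + 1) v) : BvOk n v := by
  rcases h with h | ⟨m, i, hv, hmi⟩
  · exact Or.inl h
  · exact Or.inr ⟨m, i, hv, by omega⟩

lemma bvOk_gv {n m i : Nat} (h : n ≤ m ∨ 10 ≤ i) : BvOk n (gv m i) :=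
  Or.inr ⟨m, i, rfl, h⟩

lemma bv_substC (e : CTm) (x : CVar) (v : CTm) :
    ∀ b ∈ (substC e x v).bv, b ∈ e.bv ∨ b ∈ v.bv := by
  induction e with
  | const ι n => intro b hb; simp [substC, CTm.bv] at hb
  | cvar y =>
    intro b hb
    simp only [substC] at hb
    by_cases h : y = x
    · simp only [if_pos h] at hb; exact Or.inr hb
    · simp only [if_neg h, CTm.bv] at hb; exact absurd hb (by simp)
  | clam y e ih =>
    intro b hb
    simp only [substC] at hb
    by_cases h : y = x
    · simp only [if_pos h] at hb; exact Or.inl hb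
    · simp only [if_neg h, CTm.bv, List.mem_cons] at hb
      rcases hb with hb | hb
      · exact Or.inl (by simp [CTm.bv, hb])
      · rcases ih b hb with h' | h'
        · exact Or.inl (by simp [CTm.bv]; tauto)
        · exact Or.inr h'
  | capp e₁ e₂ ih1 ih2 =>
    intro b hb
    simp only [substC, CTm.bv, List.mem_append] at hb
    rcases hb with hb | hb
    · rcases ih1 b hb with h' | h'
      · exact Or.inl (by simp [CTm.bv]; tauto)
      · exact Or.inr h'
    · rcases ih2 b hb with h' | h'
      · exact Or.inl (by simp [CTm.bv]; tauto)
      · exact Or.inr h'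
  | unit => intro b hb; simp [substC, CTm.bv] at hb
  | ccase t e₁ k e₂ iht ih1 ih2 =>
    intro b hb
    simp only [substC, CTm.bv, List.mem_cons, List.mem_append] at hb
    rcases hb with hb | (hb | hb) | hb
    · exact Or.inl (by simp [CTm.bv, hb])
    · rcases iht b hb with h' | h'
      · exact Or.inl (by simp [CTm.bv]; tauto)
      · exact Or.inr h'
    · rcases ih1 b hb with h' | h'
      · exact Or.inl (by simp [CTm.bv]; tauto)
      · exact Or.inr h'
    · by_cases h : k = x
      · simp only [if_pos h] at hb
        exact Or.inl (by simp [CTm.bv]; tauto)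
      · simp only [if_neg h] at hb
        rcases ih2 b hb with h' | h'
        · exact Or.inl (by simp [CTm.bv]; tauto)
        · exact Or.inr h'

lemma bv_kidTm : ∀ b ∈ kidTm.bv, ∃ i, 10 ≤ i ∧ b = Sum.inr (0, i) := by
  intro b hb
  simp only [kidTm, CTm.bv, List.mem_cons, List.mem_append, List.not_mem_nil, or_false] at hb
  rcases hb with h | h | h
  · exact ⟨13, by omega, by simp [h, gv]⟩
  · exact ⟨14, by omega, by simp [h, gv]⟩
  · exact ⟨15, by omega, by simp [h, gv]⟩

lemma cps_bv {n : Nat} {Γ : Ctx} {e : Tm} {τ : Ty} {μα : Tr} {α : Ty} {μβ : Tr} {β : Ty}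
    {e' : CTm} (h : Cps n Γ e τ μα α μβ β e') : ∀ v ∈ e'.bv, BvOk n v := by
  induction h with
  | const n =>
    intro v hv
    simp only [CTm.bv, List.mem_cons, List.mem_append, List.not_mem_nil, or_false, false_or] at hv
    rcases hv with h | h <;> exact h ▸ bvOk_gv (by omega)
  | var n =>
    intro v hv
    simp only [CTm.bv, List.mem_cons, List.mem_append, List.not_mem_nil, or_false, false_or] at hv
    rcases hv with h | h <;> exact h ▸ bvOk_gv (by omega)
  | abs n Γ x e τ₁ τ₂ μα α μβ β μγ γ e' hcps ih =>
    intro v hv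
    simp only [CTm.bv, List.mem_cons, List.mem_append, List.not_mem_nil, or_false, false_or] at hv
    rcases hv with h | h | h | h | h | h
    · exact h ▸ bvOk_gv (by omega)
    · exact h ▸ bvOk_gv (by omega)
    · exact Or.inl ⟨x, h⟩
    · exact h ▸ bvOk_gv (by omega)
    · exact h ▸ bvOk_gv (by omega)
    · exact bvOk_mono (ih v h)

  | app n Γ e₁ e₂ τ₁ τ₂ μα α μβ β μγ γ μδ δ e₁' e₂' h1 h2 ih1 ih2 =>
    intro v hv
    simp only [CTm.bv, List.mem_cons, List.mem_append, List.not_mem_nil, or_false, false_or] at hv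
    rcases hv with h | h | h | h | h | h | h | h
    · exact h ▸ bvOk_gv (by omega)
    · exact h ▸ bvOk_gv (by omega)
    · exact bvOk_mono (ih1 v h)
    · exact h ▸ bvOk_gv (by omega)
    · exact h ▸ bvOk_gv (by omega)
    · exact bvOk_mono (bvOk_mono (ih2 v h))
    · exact h ▸ bvOk_gv (by omega)
    · exact h ▸ bvOk_gv (by omega)
  | control n Γ k e τ τ₁ μ₁ τ₁' μ₂ μ₀ α β γ μi γ' μα μβ e' hcps hid hc1 hc2 ih =>
    intro v hv
    simp only [CTm.bv, kidTm, List.mem_cons, List.mem_append, List.not_mem_nil, or_false, false_or] at hv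
    rcases hv with h | h | h | h | h | h
    · exact h ▸ bvOk_gv (by omega)
    · exact h ▸ bvOk_gv (by omega)
    · -- v ∈ (substC e' (inl k) V).bv
      rcases bv_substC _ _ _ v h with h' | h'
      · exact bvOk_mono (ih v h')
      · -- v ∈ V.bv
        simp only [CTm.bv, List.mem_cons, List.mem_append, List.not_mem_nil, or_false,
          false_or] at h'
        rcases h' with h' | h' | h' | h'
        · exact h' ▸ bvOk_gv (by omega)
        · exact h' ▸ bvOk_gv (by omega)
        · exact h' ▸ bvOk_gv (by omega)
        · rcases bv_appendTm _ _ _ _ _ _ v h' with hm | hm | ⟨p, i, hp, hi, hv'⟩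
          · simp [CTm.bv] at hm
          · rcases bv_consTm _ _ _ _ _ _ v hm with hm' | hm' | ⟨p, i, hp, hi, hv'⟩
            · simp [CTm.bv] at hm'
            · simp [CTm.bv] at hm'
            · exact hv' ▸ bvOk_gv (Or.inr hi)
          · exact hv' ▸ bvOk_gv (Or.inr hi)
    · exact h ▸ bvOk_gv (by omega)
    · exact h ▸ bvOk_gv (by omega)
    · exact h ▸ bvOk_gv (by omega)
  | prompt n Γ e τ β' μi β'' μα α e' hcps hid ih =>
    intro v hv
    simp only [CTm.bv, kidTm, List.mem_cons, List.mem_append, List.not_mem_nil, or_false, false_or] at hv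
    rcases hv with h | h | h | h | h | h
    · exact h ▸ bvOk_gv (by omega)
    · exact h ▸ bvOk_gv (by omega)
    · exact bvOk_mono (ih v h)
    · exact h ▸ bvOk_gv (by omega)
    · exact h ▸ bvOk_gv (by omega)
    · exact h ▸ bvOk_gv (by omega)

lemma fv_ctrlV (n : Nat) (μβ μ₀ μα μ₁ μ₂ : Tr) :
    ∀ b ∈ (CTm.clam (gv n 2) (.clam (gv n 3) (.clam (gv n 4)
      (.capp (.capp (.cvar (gv n 0)) (.cvar (gv n 2)))
        (appendTm μβ μ₀ μα n (.cvar (gv n 1))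
          (consTm μ₁ μ₂ μ₀ n (.cvar (gv n 3)) (.cvar (gv n 4)))))))).fv,
      b = gv n 0 ∨ b = gv n 1 := by
  intro b hb
  simp only [CTm.fv, List.mem_filter, List.mem_append, List.mem_cons, List.mem_singleton,
    List.not_mem_nil, or_false, false_or, decide_eq_true_eq] at hb
  obtain ⟨⟨⟨(h | h) | h, h4⟩, h3⟩, h2⟩ := hb
  · exact Or.inl h
  · exact absurd h h2
  · rcases fv_appendTm _ _ _ _ _ _ b h with hm | hm
    · simp only [CTm.fv, List.mem_singleton] at hm
      exact Or.inr hm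
    · rcases fv_consTm _ _ _ _ _ _ b hm with hm' | hm' <;>
        simp only [CTm.fv, List.mem_singleton] at hm'
      · exact absurd hm' h3
      · exact absurd hm' h4

lemma cpsTy_base (ι : Nat) : cpsTy (.base ι) = .base ι := by simp [cpsTy]

lemma cpsTy_arrow (τ₁ τ₂ : Ty) (μα : Tr) (α : Ty) (μβ : Tr) (β : Ty) :
    cpsTy (.arrow τ₁ τ₂ μα α μβ β) =
      .arrow (cpsTy τ₁) (.arrow (.arrow (cpsTy τ₂) (.arrow (cpsTr μα) (cpsTy α)))
        (.arrow (cpsTr μβ) (cpsTy β))) := by simp [cpsTy]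

lemma lookup_map {Γ : Ctx} {x : String} {τ' : Ty} (hl : Lookup Γ x τ') :
    CLookup (Γ.map fun p => (Sum.inl p.1, cpsTy p.2)) (Sum.inl x) (cpsTy τ') := by
  induction hl with
  | here Γ x τ => exact .here ..
  | there Γ x y τ τ'' hne hl ih => exact .there _ _ _ _ _ (by simpa using hne) ih

lemma cps_typing {n : Nat} {Γ : Ctx} {e : Tm} {τ : Ty} {μα : Tr} {α : Ty} {μβ : Tr} {β : Ty}
    {e' : CTm} (h : Cps n Γ e τ μα α μβ β e') :
    ∀ Δ : CCtx, (∀ x τ', Lookup Γ x τ' → CLookup Δ (Sum.inl x) (cpsTy τ')) →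
      HasTypeC Δ e'
        (.arrow (.arrow (cpsTy τ) (.arrow (cpsTr μα) (cpsTy α)))
          (.arrow (cpsTr μβ) (cpsTy β))) := by
  induction h with
  | const n Γ ι c μα α =>
    intro Δ hΔ
    refine .lam _ _ _ _ _ (.lam _ _ _ _ _
      (.app _ _ _ (cpsTr μα) _ (.app _ _ _ (cpsTy (.base ι)) _ ?_ ?_) ?_))
    · exact .var _ _ _ (.there _ _ _ _ _ (by simp [gv]) (.here ..))
    · rw [cpsTy_base]; exact .const _ _ _
    · exact .var _ _ _ (.here ..)
  | var n Γ x τ μα α hl =>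
    intro Δ hΔ
    refine .lam _ _ _ _ _ (.lam _ _ _ _ _
      (.app _ _ _ (cpsTr μα) _ (.app _ _ _ (cpsTy τ) _ ?_ ?_) ?_))
    · exact .var _ _ _ (.there _ _ _ _ _ (by simp [gv]) (.here ..))
    · exact .var _ _ _ (.there _ _ _ _ _ (by simp [gv]) (.there _ _ _ _ _ (by simp [gv])
        (hΔ x τ hl)))
    · exact .var _ _ _ (.here ..)
  | abs n Γ x e τ₁ τ₂ μα α μβ β μγ γ e' hcps ih =>
    intro Δ hΔ
    rw [cpsTy_arrow]
    refine .lam _ _ _ _ _ (.lam _ _ _ _ _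
      (.app _ _ _ (cpsTr μγ) _ (.app _ _ _
        (.arrow (cpsTy τ₁) (.arrow (.arrow (cpsTy τ₂) (.arrow (cpsTr μα) (cpsTy α)))
          (.arrow (cpsTr μβ) (cpsTy β)))) _ ?_ ?_) ?_))
    · exact .var _ _ _ (.there _ _ _ _ _ (by simp [gv]) (.here ..))
    · refine .lam _ _ _ _ _ (.lam _ _ _ _ _ (.lam _ _ _ _ _
        (.app _ _ _ (cpsTr μβ) _
          (.app _ _ _ (.arrow (cpsTy τ₂) (.arrow (cpsTr μα) (cpsTy α))) _ ?_ ?_) ?_)))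
      · refine ih _ ?_
        intro y τ' hl
        cases hl with
        | here =>
          exact .there _ _ _ _ _ (by simp [gv]) (.there _ _ _ _ _ (by simp [gv]) (.here ..))
        | there _ _ _ _ _ hne hl' =>
          exact .there _ _ _ _ _ (by simp [gv]) (.there _ _ _ _ _ (by simp [gv])
            (.there _ _ _ _ _ (by simpa using hne) (.there _ _ _ _ _ (by simp [gv])
              (.there _ _ _ _ _ (by simp [gv]) (hΔ _ _ hl')))))
      · exact .var _ _ _ (.there _ _ _ _ _ (by simp [gv]) (.here ..))
      · exact .var _ _ _ (.here ..)
    · exact .var _ _ _ (.here ..)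
  | app n Γ e₁ e₂ τ₁ τ₂ μα α μβ β μγ γ μδ δ e₁' e₂' h1 h2 ih1 ih2 =>
    intro Δ hΔ
    refine .lam _ _ _ _ _ (.lam _ _ _ _ _
      (.app _ _ _ (cpsTr μδ) _
        (.app _ _ _ (.arrow (cpsTy (.arrow τ₁ τ₂ μα α μβ β))
          (.arrow (cpsTr μγ) (cpsTy γ))) _ ?_ ?_) ?_))
    · refine ih1 _ ?_
      intro y τ' hl
      exact .there _ _ _ _ _ (by simp [gv]) (.there _ _ _ _ _ (by simp [gv]) (hΔ _ _ hl))
    · -- K₁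
      refine .lam _ _ _ _ _ (.lam _ _ _ _ _
        (.app _ _ _ (cpsTr μγ) _
          (.app _ _ _ (.arrow (cpsTy τ₁) (.arrow (cpsTr μβ) (cpsTy β))) _ ?_ ?_) ?_))
      · refine ih2 _ ?_
        intro y τ' hl
        exact .there _ _ _ _ _ (by simp [gv]) (.there _ _ _ _ _ (by simp [gv])
          (.there _ _ _ _ _ (by simp [gv]) (.there _ _ _ _ _ (by simp [gv]) (hΔ _ _ hl))))
      · -- K₂
        refine .lam _ _ _ _ _ (.lam _ _ _ _ _
          (.app _ _ _ (cpsTr μβ) _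
            (.app _ _ _ (.arrow (cpsTy τ₂) (.arrow (cpsTr μα) (cpsTy α))) _
              (.app _ _ _ (cpsTy τ₁) _ ?_ ?_) ?_) ?_))
        · -- gv n 2
          have hl2 : CLookup ((gv n 5, cpsTr μβ) :: (gv n 4, cpsTy τ₁) ::
              (gv n 3, cpsTr μγ) :: (gv n 2, cpsTy (.arrow τ₁ τ₂ μα α μβ β)) ::
              (gv n 1, cpsTr μδ) ::
              (gv n 0, .arrow (cpsTy τ₂) (.arrow (cpsTr μα) (cpsTy α))) :: Δ)
              (gv n 2) (cpsTy (.arrow τ₁ τ₂ μα α μβ β)) :=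
            .there _ _ _ _ _ (by simp [gv]) (.there _ _ _ _ _ (by simp [gv])
              (.there _ _ _ _ _ (by simp [gv]) (.here ..)))
          have hv := HasTypeC.var _ _ _ hl2
          rwa [cpsTy_arrow] at hv
        · exact .var _ _ _ (.there _ _ _ _ _ (by simp [gv]) (.here ..))
        · exact .var _ _ _ (.there _ _ _ _ _ (by simp [gv]) (.there _ _ _ _ _ (by simp [gv])
            (.there _ _ _ _ _ (by simp [gv]) (.there _ _ _ _ _ (by simp [gv])
              (.there _ _ _ _ _ (by simp [gv]) (.here ..))))))
        · exact .var _ _ _ (.here ..)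
      · exact .var _ _ _ (.here ..)
    · exact .var _ _ _ (.here ..)
  | control n Γ k e τ τ₁ μ₁ τ₁' μ₂ μ₀ α β γ μi γ' μα μβ e' hcps hid hc1 hc2 ih =>
    intro Δ hΔ
    refine .lam _ _ _ _ _ (.lam _ _ _ _ _ ?_)
    refine .app _ _ _ (cpsTr .empty) _
      (.app _ _ _ (.arrow (cpsTy γ) (.arrow (cpsTr μi) (cpsTy γ'))) _ ?_
        (kid_typing hid _)) ?_
    case refine_2 => rw [cpsTr_empty]; exact .unit _
    -- the substituted body
    have hV : HasTypeC ((gv n 1, cpsTr μβ) ::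
        (gv n 0, .arrow (cpsTy τ) (.arrow (cpsTr μα) (cpsTy α))) :: Δ)
        (CTm.clam (gv n 2) (.clam (gv n 3) (.clam (gv n 4)
          (.capp (.capp (.cvar (gv n 0)) (.cvar (gv n 2)))
            (appendTm μβ μ₀ μα n (.cvar (gv n 1))
              (consTm μ₁ μ₂ μ₀ n (.cvar (gv n 3)) (.cvar (gv n 4))))))))
        (cpsTy (.arrow τ τ₁ μ₁ τ₁' μ₂ α)) := by
      rw [cpsTy_arrow]
      refine .lam _ _ _ _ _ (.lam _ _ _ _ _ (.lam _ _ _ _ _ ?_))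
      refine .app _ _ _ (cpsTr μα) _ (.app _ _ _ (cpsTy τ) _ ?_ ?_) ?_
      · exact .var _ _ _ (.there _ _ _ _ _ (by simp [gv]) (.there _ _ _ _ _ (by simp [gv])
          (.there _ _ _ _ _ (by simp [gv]) (.there _ _ _ _ _ (by simp [gv]) (.here ..)))))
      · exact .var _ _ _ (.there _ _ _ _ _ (by simp [gv]) (.there _ _ _ _ _ (by simp [gv])
          (.here ..)))
      · refine append_typing hc2 n _ (gv n 1) _ ?_ ?_ (freshV_gv_low (by omega)) ?_
        · exact .there _ _ _ _ _ (by simp [gv]) (.there _ _ _ _ _ (by simp [gv])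
            (.there _ _ _ _ _ (by simp [gv]) (.here ..)))
        · refine cons_typing hc1 rfl n _ (gv n 3) (.cvar (gv n 4)) ?_ ?_
            (freshV_gv_low (by omega)) ?_
          · rw [cpsTr_cons]
            exact .there _ _ _ _ _ (by simp [gv]) (.here ..)
          · exact .var _ _ _ (.here ..)
          · intro v hv
            simp only [CTm.fv, List.mem_singleton] at hv
            subst hv
            exact freshV_gv_low (by omega)
        · intro v hv
          rcases fv_consTm _ _ _ _ _ _ v hv with h | h
          · simp only [CTm.fv, List.mem_singleton] at h
            subst h
            exact freshV_gv_low (by omega)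
          · simp only [CTm.fv, List.mem_singleton] at h
            subst h
            exact freshV_gv_low (by omega)
    refine hasTypeC_subst
      (ih ((Sum.inl k, cpsTy (.arrow τ τ₁ μ₁ τ₁' μ₂ α)) :: _) ?_) (cequiv_refl _) hV ?_
    · intro y τ' hl
      cases hl with
      | here => exact .here ..
      | there _ _ _ _ _ hne hl' =>
        exact .there _ _ _ _ _ (by simpa using hne) (.there _ _ _ _ _ (by simp [gv])
          (.there _ _ _ _ _ (by simp [gv]) (hΔ _ _ hl')))
    · intro b hb hbV
      have h1 := cps_bv hcps b hb
      rcases fv_ctrlV n μβ μ₀ μα μ₁ μ₂ b hbV with h | h <;> subst h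
      · rcases h1 with ⟨s, hs⟩ | ⟨m, i, hvi, hmi⟩
        · simp [gv] at hs
        · simp only [gv, Sum.inr.injEq, Prod.mk.injEq] at hvi
          omega
      · rcases h1 with ⟨s, hs⟩ | ⟨m, i, hvi, hmi⟩
        · simp [gv] at hs
        · simp only [gv, Sum.inr.injEq, Prod.mk.injEq] at hvi
          omega
  | prompt n Γ e τ β' μi β'' μα α e' hcps hid ih =>
    intro Δ hΔ
    refine .lam _ _ _ _ _ (.lam _ _ _ _ _
      (.app _ _ _ (cpsTr μα) _ (.app _ _ _ (cpsTy τ) _ ?_ ?_) ?_))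
    · exact .var _ _ _ (.there _ _ _ _ _ (by simp [gv]) (.here ..))
    · refine .app _ _ _ (cpsTr .empty) _
        (.app _ _ _ (.arrow (cpsTy β') (.arrow (cpsTr μi) (cpsTy β''))) _ (ih _ ?_)
          (kid_typing hid _)) ?_
      · intro y τ' hl
        exact .there _ _ _ _ _ (by simp [gv]) (.there _ _ _ _ _ (by simp [gv]) (hΔ _ _ hl))
      · rw [cpsTr_empty]; exact .unit _
    · exact .var _ _ _ (.here ..)
/-- **Type preservation of the CPS translation**: if
    `Γ ⊢ e : τ @ μα α / μβ β` in λF (witnessed by a derivation that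
    CPS-translates to `e'`), then
    `⟦Γ⟧ ⊢C ⟦e⟧ : (⟦τ⟧ → ⟦μα⟧ → ⟦α⟧) → ⟦μβ⟧ → ⟦β⟧` in λC. -/
theorem cps_preserves_typing (n : Nat) (Γ : Ctx) (e : Tm) (τ : Ty) (μα : Tr)
    (α : Ty) (μβ : Tr) (β : Ty) (e' : CTm)
    (h : Cps n Γ e τ μα α μβ β e') :
    HasTypeC (Γ.map fun p => (Sum.inl p.1, cpsTy p.2)) e'
      (.arrow (.arrow (cpsTy τ) (.arrow (cpsTr μα) (cpsTy α)))
        (.arrow (cpsTr μβ) (cpsTy β))) := by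
  exact cps_typing h _ (fun x τ' hl => lookup_map hl)

end LambdaF
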